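/- arXiv:2009.10009 — 6 statements merged into one kernel-verified Lean document; each statement's English description precedes it below -/
import Mathlib

section
/- Let G be the graph on V={1,2,3,4} with edge set {(1,3),(1,4),(2,3),(2,4),(3,4)} (the complete graph on 4 vertices minus the edge (1,2)). Fix δ∈(0,1/6) and set α_1=α_2=1/4−δ, α_3=1/2−δ, α_4=3δ. Then α satisfies Ncond for G and Q(G,α) = [ ((1/2−2δ)(1/2+2δ))/(4δ)² + ((1/2−δ)(1/2+δ))/(2δ)² + 3δ(1−3δ)/(1−6δ)² ] / [ 1 + (1/2−2δ)/(4δ) + (1/2−δ)/(2δ) + 3δ/(1−6δ) ]. -/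
open Classical Finset

noncomputable section

def nbr {V : Type} [Fintype V] (G : SimpleGraph V) (S : Finset V) : Finset V :=
  Finset.univ.filter fun j => ∃ i ∈ S, G.Adj i j

def aSum {V : Type} (α : V → ℝ) (S : Finset V) : ℝ := ∑ i ∈ S, α i

def IsIndep {V : Type} (G : SimpleGraph V) (I : Finset V) : Prop :=
  I.Nonempty ∧ ∀ i ∈ I, ∀ j ∈ I, ¬ G.Adj i j

def indepSets {V : Type} [Fintype V] (G : SimpleGraph V) : Finset (Finset V) :=
  Finset.univ.filter fun I => IsIndep G I

def Ncond {V : Type} [Fintype V] (G : SimpleGraph V) (α : V → ℝ) : Prop :=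
  ∀ I ∈ indepSets G, aSum α I < aSum α (nbr G I)

def Tlist {V : Type} [Fintype V] [DecidableEq V] (G : SimpleGraph V) (α : V → ℝ) :
    List V → Finset V → ℝ
  | [], _ => 1
  | i :: l, P =>
      α i / (aSum α (nbr G (insert i P)) - aSum α (insert i P)) * Tlist G α l (insert i P)

def Erat {V : Type} [Fintype V] [DecidableEq V] (G : SimpleGraph V) (α : V → ℝ) :
    List V → Finset V → ℝ
  | [], _ => 0
  | i :: l, P =>
      aSum α (nbr G (insert i P)) / (aSum α (nbr G (insert i P)) - aSum α (insert i P)) +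
        Erat G α l (insert i P)

def TI {V : Type} [Fintype V] [DecidableEq V] (G : SimpleGraph V) (α : V → ℝ) (I : Finset V) : ℝ :=
  ∑ l ∈ I.toList.permutations.toFinset, Tlist G α l ∅

def EI {V : Type} [Fintype V] [DecidableEq V] (G : SimpleGraph V) (α : V → ℝ) (I : Finset V) : ℝ :=
  ∑ l ∈ I.toList.permutations.toFinset, Erat G α l ∅ * Tlist G α l ∅

def meanQ {V : Type} [Fintype V] [DecidableEq V] (G : SimpleGraph V) (α : V → ℝ) : ℝ :=
  (1 + ∑ I ∈ indepSets G, TI G α I)⁻¹ * ∑ I ∈ indepSets G, EI G α I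

def IsWord {V : Type} (G : SimpleGraph V) (w : List V) : Prop :=
  w.Pairwise fun a b => ¬ G.Adj a b

def piHatAux {V : Type} [Fintype V] [DecidableEq V] (G : SimpleGraph V) (α : V → ℝ) :
    List V → Finset V → ℝ
  | [], _ => 1
  | i :: l, P => α i / aSum α (nbr G (insert i P)) * piHatAux G α l (insert i P)

def piHat {V : Type} [Fintype V] [DecidableEq V] (G : SimpleGraph V) (α : V → ℝ) (w : List V) : ℝ :=
  piHatAux G α w ∅

def addEdge {V : Type} (G : SimpleGraph V) (u v : V) : SimpleGraph V :=
  G ⊔ SimpleGraph.fromEdgeSet {s(u, v)}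

end

def Gquasi : SimpleGraph (Fin 4) where
  Adj i j := i ≠ j ∧ ¬((i = 0 ∧ j = 1) ∨ (i = 1 ∧ j = 0))
  symm := by
    constructor
    rintro i j ⟨h1, h2⟩
    exact ⟨h1.symm, by tauto⟩
  loopless := by
    constructor
    rintro i ⟨h1, _⟩
    exact h1 rfl

instance : DecidableRel Gquasi.Adj := fun i j =>
  inferInstanceAs (Decidable (i ≠ j ∧ ¬((i = 0 ∧ j = 1) ∨ (i = 1 ∧ j = 0))))

instance {V : Type} [DecidableEq V] (G : SimpleGraph V) [DecidableRel G.Adj] (I : Finset V) :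
    Decidable (IsIndep G I) :=
  inferInstanceAs (Decidable (I.Nonempty ∧ ∀ i ∈ I, ∀ j ∈ I, ¬ G.Adj i j))

lemma indep_eq : indepSets Gquasi = {{0},{1},{2},{3},{0,1}} := by
  unfold indepSets
  rw [Finset.filter_congr_decidable]
  decide
lemma pair_perm {γ : Type} [DecidableEq γ] {a b : γ} (hab : a ≠ b) {l : List γ} :
    l.Perm [a,b] ↔ l = [a,b] ∨ l = [b,a] := by
  constructor
  · intro h
    match l, h.length_eq with
    | [x, y], _ =>
      have hx := h.mem_iff (a := x)
      have hy := h.mem_iff (a := y)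
      simp at hx hy
      have hnd : x ≠ y := by
        have := h.nodup_iff.2 (by simp [hab])
        simp at this; exact this
      rcases hx with rfl | rfl <;> rcases hy with rfl | rfl
      · exact absurd rfl hnd
      · exact Or.inl rfl
      · exact Or.inr rfl
      · exact absurd rfl hnd
  · rintro (rfl | rfl)
    · exact List.Perm.refl _
    · exact List.Perm.swap' _ _ (List.Perm.refl _)
lemma nbr_eval (S T : Finset (Fin 4))
    (h : Finset.univ.filter (fun j => decide (∃ i ∈ S, Gquasi.Adj i j)) = T) : nbr Gquasi S = T := by
  unfold nbr; rw [Finset.filter_congr_decidable]; simpa using h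

lemma nbr0 : nbr Gquasi {0} = {2,3} := nbr_eval _ _ (by decide)
lemma nbr1 : nbr Gquasi {1} = {2,3} := nbr_eval _ _ (by decide)
lemma nbr2 : nbr Gquasi {2} = {0,1,3} := nbr_eval _ _ (by decide)
lemma nbr3 : nbr Gquasi {3} = {0,1,2} := nbr_eval _ _ (by decide)
lemma nbr01 : nbr Gquasi {0,1} = {2,3} := nbr_eval _ _ (by decide)
lemma nbr10 : nbr Gquasi {1,0} = {2,3} := nbr_eval _ _ (by decide)

lemma permS {γ : Type} [DecidableEq γ] (a : γ) :
    (({a} : Finset γ).toList.permutations.toFinset = {[a]}) := by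
  ext l
  simp [List.mem_permutations, Finset.toList_singleton, List.perm_singleton]

lemma perm01 : (({0,1}:Finset (Fin 4)).toList.permutations.toFinset = {[0,1],[1,0]}) := by
  have h : (({0,1}:Finset (Fin 4)).toList).Perm [0,1] := by
    have := Finset.toList_insert (s := ({1}:Finset (Fin 4))) (a := (0:Fin 4)) (by decide)
    rw [Finset.toList_singleton] at this; exact this
  ext l
  simp only [List.mem_toFinset, List.mem_permutations, Finset.mem_insert, Finset.mem_singleton]
  rw [show ∀ m : List (Fin 4), m.Perm ({0,1}:Finset (Fin 4)).toList ↔ m.Perm [0,1] from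
    fun m => ⟨fun h2 => h2.trans h, fun h2 => h2.trans h.symm⟩]
  exact pair_perm (by decide)
set_option maxHeartbeats 2000000 in
theorem stmt2 (δ : ℝ) (h0 : 0 < δ) (h1 : δ < 1/6) :
    Ncond Gquasi ![1/4 - δ, 1/4 - δ, 1/2 - δ, 3*δ] ∧
    meanQ Gquasi ![1/4 - δ, 1/4 - δ, 1/2 - δ, 3*δ] =
      ((1/2 - 2*δ) * (1/2 + 2*δ) / (4*δ)^2 + (1/2 - δ) * (1/2 + δ) / (2*δ)^2
          + 3*δ*(1 - 3*δ) / (1 - 6*δ)^2) /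
        (1 + (1/2 - 2*δ)/(4*δ) + (1/2 - δ)/(2*δ) + 3*δ/(1 - 6*δ)) := by
  set α : Fin 4 → ℝ := ![1/4 - δ, 1/4 - δ, 1/2 - δ, 3*δ] with hα
  have a0 : α 0 = 1/4 - δ := rfl
  have a1 : α 1 = 1/4 - δ := rfl
  have a2 : α 2 = 1/2 - δ := rfl
  have a3 : α 3 = 3*δ := rfl
  have s0 : aSum α {0} = 1/4 - δ := by simp [aSum, a0]
  have s1 : aSum α {1} = 1/4 - δ := by simp [aSum, a1]
  have s2 : aSum α {2} = 1/2 - δ := by simp [aSum, a2]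
  have s3 : aSum α {3} = 3*δ := by simp [aSum, a3]
  have s01 : aSum α {0,1} = 1/2 - 2*δ := by
    simp [aSum, Finset.sum_insert, a0, a1]; ring
  have s10 : aSum α {1,0} = 1/2 - 2*δ := by
    simp [aSum, Finset.sum_insert, a0, a1]; ring
  have s23 : aSum α {2,3} = 1/2 + 2*δ := by
    simp [aSum, Finset.sum_insert, a2, a3]; ring
  have s013 : aSum α {0,1,3} = 1/2 + δ := by
    simp [aSum, Finset.sum_insert, a0, a1, a3]; ring
  have s012 : aSum α {0,1,2} = 1 - 3*δ := by
    simp [aSum, Finset.sum_insert, a0, a1, a2]; ring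
  constructor
  · intro I hI
    rw [indep_eq] at hI
    simp only [Finset.mem_insert, Finset.mem_singleton] at hI
    rcases hI with rfl | rfl | rfl | rfl | rfl
    · rw [nbr0, s0, s23]; linarith
    · rw [nbr1, s1, s23]; linarith
    · rw [nbr2, s2, s013]; linarith
    · rw [nbr3, s3, s012]; linarith
    · rw [nbr01, s01, s23]; linarith
  · have hd1 : (1/4 : ℝ) + 3*δ ≠ 0 := by positivity
    have hd2 : (2:ℝ)*δ ≠ 0 := by positivity
    have hd3 : (1:ℝ) - 6*δ ≠ 0 := by linarith
    have hd4 : (4:ℝ)*δ ≠ 0 := by positivity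
    rw [meanQ, indep_eq]
    rw [show ({{0},{1},{2},{3},{0,1}} : Finset (Finset (Fin 4))) =
      insert {0} (insert {1} (insert {2} (insert {3} ({({0,1} : Finset (Fin 4))} : Finset (Finset (Fin 4)))))) from rfl]
    rw [Finset.sum_insert (by decide), Finset.sum_insert (by decide),
        Finset.sum_insert (by decide), Finset.sum_insert (by decide),
        Finset.sum_singleton,
        Finset.sum_insert (by decide), Finset.sum_insert (by decide),
        Finset.sum_insert (by decide), Finset.sum_insert (by decide),
        Finset.sum_singleton]
    rw [TI, TI, TI, TI, TI, EI, EI, EI, EI, EI, permS, permS, permS, permS, perm01,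
        Finset.sum_singleton, Finset.sum_singleton, Finset.sum_singleton,
        Finset.sum_singleton, Finset.sum_singleton, Finset.sum_singleton,
        Finset.sum_singleton, Finset.sum_singleton,
        Finset.sum_insert (by decide), Finset.sum_singleton,
        Finset.sum_insert (by decide), Finset.sum_singleton]
    simp only [Tlist, Erat, LawfulSingleton.insert_empty_eq]
    rw [show (insert (1:Fin 4) ({0} : Finset (Fin 4))) = ({1,0} : Finset (Fin 4)) from rfl,
        show (insert (0:Fin 4) ({1} : Finset (Fin 4))) = ({0,1} : Finset (Fin 4)) from rfl]
    rw [nbr0, nbr1, nbr2, nbr3, nbr01, nbr10,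
        s0, s1, s2, s3, s01, s10, s23, s013, s012]
    have e1 : (1/2 + 2*δ) - (1/4 - δ) = 1/4 + 3*δ := by ring
    have e2 : (1/2 + δ) - (1/2 - δ) = 2*δ := by ring
    have e3 : (1 - 3*δ) - 3*δ = 1 - 6*δ := by ring
    have e4 : (1/2 + 2*δ) - (1/2 - 2*δ) = 4*δ := by ring
    rw [e1, e2, e3, e4, a0, a1, a2, a3]
    have hden : (1:ℝ) + (1/2 - 2*δ)/(4*δ) + (1/2 - δ)/(2*δ) + 3*δ/(1 - 6*δ) ≠ 0 := by
      have : (0:ℝ) < (1/2 - 2*δ)/(4*δ) := by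
        apply div_pos <;> linarith
      have : (0:ℝ) < (1/2 - δ)/(2*δ) := by
        apply div_pos <;> linarith
      have : (0:ℝ) < 3*δ/(1 - 6*δ) := by
        apply div_pos <;> linarith
      positivity
    have hT : (1:ℝ) + ((1/4 - δ) / (1/4 + 3*δ) * 1 + ((1/4 - δ) / (1/4 + 3*δ) * 1 +
        ((1/2 - δ) / (2*δ) * 1 + (3*δ / (1 - 6*δ) * 1 +
        ((1/4 - δ) / (1/4 + 3*δ) * ((1/4 - δ) / (4*δ) * 1) +
          (1/4 - δ) / (1/4 + 3*δ) * ((1/4 - δ) / (4*δ) * 1)))))) ≠ 0 := by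
      have p1 : (0:ℝ) < (1/4 - δ)/(1/4 + 3*δ) := by apply div_pos <;> linarith
      have p2 : (0:ℝ) < (1/2 - δ)/(2*δ) := by apply div_pos <;> linarith
      have p3 : (0:ℝ) < 3*δ/(1 - 6*δ) := by apply div_pos <;> linarith
      have p4 : (0:ℝ) < (1/4 - δ)/(4*δ) := by apply div_pos <;> linarith
      positivity
    rw [inv_mul_eq_div, div_eq_div_iff hT hden]
    have hd5 : (1:ℝ) - δ*6 ≠ 0 := by linarith
    field_simp
    ring
end

section
/- There exist real numbers r1, r2 with 0 < r1 < r2 < 1/6 such that for every δ∈(0,1/6): g(δ) > f(δ) if and only if δ∈(0,r1)∪(r2,1/6) (and g(δ) < f(δ) for δ∈(r1,r2)). (Numerically r1 ≈ 0.0563 and r2 ≈ 0.134.) -/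
open Classical Finset

noncomputable def fQ (x : ℝ) : ℝ :=
  ((1/2 - 2*x) * (1/2 + 2*x) / (4*x)^2 + (1/2 - x) * (1/2 + x) / (2*x)^2
      + 3*x*(1 - 3*x) / (1 - 6*x)^2) /
    (1 + (1/2 - 2*x)/(4*x) + (1/2 - x)/(2*x) + 3*x/(1 - 6*x))

noncomputable def gQ (x : ℝ) : ℝ :=
  (2 * ((1/4 - x) * (3/4 + x)) / (1/2 + 2*x)^2 + (1/2 - x) * (1/2 + x) / (2*x)^2
      + 3*x*(1 - 3*x) / (1 - 6*x)^2) /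
    (1 + 2*(1/4 - x)/(1/2 + 2*x) + (1/2 - x)/(2*x) + 3*x/(1 - 6*x))

def Qp (x : ℝ) : ℝ := 1 - 26*x + 152*x^2 - 112*x^3 + 384*x^4 - 2304*x^5

lemma denpos (δ : ℝ) (h1 : 0 < δ) (h2 : δ < 1/6) :
    0 < 192*δ*(δ-1/2)*(δ+1/4)*(24*δ^2-8*δ-1) := by
  have hQd : 24*δ^2 - 8*δ - 1 < 0 := by nlinarith
  have p1 : 0 < 192*δ*(δ+1/4) := by positivity
  have p2 : 0 < (δ-1/2)*(24*δ^2-8*δ-1) := mul_pos_of_neg_of_neg (by linarith) hQd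
  have e : 192*δ*(δ-1/2)*(δ+1/4)*(24*δ^2-8*δ-1)
      = (192*δ*(δ+1/4))*((δ-1/2)*(24*δ^2-8*δ-1)) := by ring
  rw [e]; exact mul_pos p1 p2

lemma key (δ : ℝ) (h1 : 0 < δ) (h2 : δ < 1/6) :
    gQ δ - fQ δ = Qp δ / (192*δ*(δ-1/2)*(δ+1/4)*(24*δ^2-8*δ-1)) := by
  have hδ : δ ≠ 0 := ne_of_gt h1
  have h6 : (1:ℝ) - 6*δ > 0 := by linarith
  have h6' : (1:ℝ) - 6*δ ≠ 0 := ne_of_gt h6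
  have h12 : (1:ℝ)/2 + 2*δ > 0 := by linarith
  have h12' : (1:ℝ)/2 + 2*δ ≠ 0 := ne_of_gt h12
  have hDf : (0:ℝ) < 1 + (1/2 - 2*δ)/(4*δ) + (1/2 - δ)/(2*δ) + 3*δ/(1 - 6*δ) := by
    have a1 : (0:ℝ) ≤ (1/2 - 2*δ)/(4*δ) := div_nonneg (by linarith) (by linarith)
    have a2 : (0:ℝ) ≤ (1/2 - δ)/(2*δ) := div_nonneg (by linarith) (by linarith)
    have a3 : (0:ℝ) ≤ 3*δ/(1 - 6*δ) := div_nonneg (by linarith) (by linarith)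
    linarith
  have hDg : (0:ℝ) < 1 + 2*(1/4 - δ)/(1/2 + 2*δ) + (1/2 - δ)/(2*δ) + 3*δ/(1 - 6*δ) := by
    have a1 : (0:ℝ) ≤ 2*(1/4 - δ)/(1/2 + 2*δ) := div_nonneg (by linarith) (by linarith)
    have a2 : (0:ℝ) ≤ (1/2 - δ)/(2*δ) := div_nonneg (by linarith) (by linarith)
    have a3 : (0:ℝ) ≤ 3*δ/(1 - 6*δ) := div_nonneg (by linarith) (by linarith)
    linarith
  have hD : 192*δ*(δ-1/2)*(δ+1/4)*(24*δ^2-8*δ-1) ≠ 0 := ne_of_gt (denpos δ h1 h2)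
  unfold fQ gQ Qp
  rw [div_sub_div _ _ (ne_of_gt hDg) (ne_of_gt hDf), div_eq_div_iff (by positivity) hD]
  have h6'' : (1:ℝ) - δ*6 ≠ 0 := by linarith
  field_simp
  ring

lemma hW (a b c : ℝ) (ha : 0 ≤ a) (ha6 : a ≤ 1/6) (hb : 0 ≤ b) (hb6 : b ≤ 1/6)
    (hc : 0 ≤ c) (hc6 : c ≤ 1/6) :
    0 < 152 - 112*(a+b+c) + 384*(a^2+b^2+c^2+a*b+a*c+b*c)
      - 2304*(a^3+b^3+c^3+a^2*b+a^2*c+b^2*a+b^2*c+c^2*a+c^2*b+a*b*c) := by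
  nlinarith [mul_nonneg (mul_nonneg ha hb) hc, sq_nonneg (a+b+c),
    mul_nonneg (sub_nonneg.2 ha6) (sq_nonneg a), mul_nonneg (sub_nonneg.2 hb6) (sq_nonneg b),
    mul_nonneg (sub_nonneg.2 hc6) (sq_nonneg c),
    mul_nonneg (mul_nonneg (sub_nonneg.2 ha6) hb) hc,
    mul_nonneg (mul_nonneg (sub_nonneg.2 hb6) ha) hc,
    mul_nonneg (mul_nonneg (sub_nonneg.2 hc6) ha) hb,
    mul_nonneg (mul_nonneg (sub_nonneg.2 ha6) ha) hb,
    mul_nonneg (mul_nonneg (sub_nonneg.2 ha6) ha) hc,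
    mul_nonneg (mul_nonneg (sub_nonneg.2 hb6) hb) ha,
    mul_nonneg (mul_nonneg (sub_nonneg.2 hb6) hb) hc,
    mul_nonneg (mul_nonneg (sub_nonneg.2 hc6) hc) ha,
    mul_nonneg (mul_nonneg (sub_nonneg.2 hc6) hc) hb]

lemma secant (a b c : ℝ) (h0 : 0 ≤ a) (hab : a < b) (hbc : b < c) (hc : c ≤ 1/6) :
    (c-a) * Qp b < (c-b) * Qp a + (b-a) * Qp c := by
  have hW' := hW a b c h0 (by linarith) (by linarith) (by linarith) (by linarith) hc
  have hp : 0 < (b-a)*(c-b)*(c-a) := by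
    have := mul_pos (mul_pos (sub_pos.2 hab) (sub_pos.2 hbc)) (sub_pos.2 (hab.trans hbc))
    linarith
  have e : (c-b) * Qp a + (b-a) * Qp c - (c-a) * Qp b
      = (b-a)*(c-b)*(c-a) * (152 - 112*(a+b+c) + 384*(a^2+b^2+c^2+a*b+a*c+b*c)
        - 2304*(a^3+b^3+c^3+a^2*b+a^2*c+b^2*a+b^2*c+c^2*a+c^2*b+a*b*c)) := by
    unfold Qp; ring
  nlinarith [mul_pos hp hW', e]

theorem stmt4 :
    ∃ r1 r2 : ℝ, 0 < r1 ∧ r1 < r2 ∧ r2 < 1/6 ∧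
      ∀ δ ∈ Set.Ioo (0:ℝ) (1/6),
        (gQ δ > fQ δ ↔ δ ∈ Set.Ioo (0:ℝ) r1 ∪ Set.Ioo r2 (1/6)) ∧
        (δ ∈ Set.Ioo r1 r2 → gQ δ < fQ δ) := by
  have hQc : Continuous Qp := by unfold Qp; continuity
  have hv1 : Qp (1/20) > 0 := by norm_num [Qp]
  have hv2 : Qp (1/10) < 0 := by norm_num [Qp]
  have hv3 : Qp (3/20) > 0 := by norm_num [Qp]
  obtain ⟨r1, hr1mem, hr1⟩ := intermediate_value_Ioo' (by norm_num : (1/20:ℝ) ≤ 1/10)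
    hQc.continuousOn (Set.mem_Ioo.2 ⟨hv2, hv1⟩)
  obtain ⟨r2, hr2mem, hr2⟩ := intermediate_value_Ioo (by norm_num : (1/10:ℝ) ≤ 3/20)
    hQc.continuousOn (Set.mem_Ioo.2 ⟨hv2, hv3⟩)
  obtain ⟨hr1a, hr1b⟩ := hr1mem
  obtain ⟨hr2a, hr2b⟩ := hr2mem
  have hr12 : r1 < r2 := lt_trans hr1b hr2a
  refine ⟨r1, r2, by linarith, hr12, by linarith, ?_⟩
  rintro δ ⟨hδ0, hδ6⟩
  -- sign of Qp δ determines everything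
  have hkey := key δ hδ0 hδ6
  have hden := denpos δ hδ0 hδ6
  have sign1 : δ < r1 → 0 < Qp δ := by
    intro h
    have := secant δ r1 r2 (le_of_lt hδ0) h hr12 (by linarith)
    rw [hr1, hr2] at this
    nlinarith
  have sign2 : r1 < δ → δ < r2 → Qp δ < 0 := by
    intro h h'
    have := secant r1 δ r2 (by linarith) h h' (by linarith)
    rw [hr1, hr2] at this
    nlinarith
  have sign3 : r2 < δ → 0 < Qp δ := by
    intro h
    have := secant r1 r2 δ (by linarith) hr12 h (by linarith)
    rw [hr1, hr2] at this
    nlinarith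
  constructor
  · constructor
    · intro hgf
      have hQpos : 0 < Qp δ := by
        by_contra hq
        push_neg at hq
        have : gQ δ - fQ δ ≤ 0 := by
          rw [hkey]
          exact div_nonpos_of_nonpos_of_nonneg hq (le_of_lt hden)
        linarith
      rcases lt_trichotomy δ r1 with h | h | h
      · exact Or.inl ⟨hδ0, h⟩
      · exfalso; rw [h, hr1] at hQpos; linarith
      · rcases lt_trichotomy δ r2 with h' | h' | h'
        · exact absurd (sign2 h h') (by linarith)
        · exfalso; rw [h', hr2] at hQpos; linarith
        · exact Or.inr ⟨h', hδ6⟩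
    · intro hmem
      have hQpos : 0 < Qp δ := by
        rcases hmem with ⟨_, h⟩ | ⟨h, _⟩
        · exact sign1 h
        · exact sign3 h
      have : 0 < gQ δ - fQ δ := by
        rw [hkey]; exact div_pos hQpos hden
      linarith
  · rintro ⟨h, h'⟩
    have hQneg := sign2 h h'
    have : gQ δ - fQ δ < 0 := by
      rw [hkey]; exact div_neg_of_neg_of_pos hQneg hden
    linarith
end

section
/- As δ tends to 0 from the right, δ·(g(δ) − f(δ)) tends to 1/24 (= 0.041666…). -/
open Classical Finset

noncomputable def NFp (x : ℝ) : ℝ := 40 - 720*x + 4064*x^2 - 2496*x^3 - 41472*x^4 + 82944*x^5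
noncomputable def DFp (x : ℝ) : ℝ := 192 - 3456*x + 22272*x^2 - 59904*x^3 + 55296*x^4
noncomputable def NGp (x : ℝ) : ℝ := 1/16 - (3/8)*x - (5/2)*x^2 - 3*x^3 + 216*x^4 - 120*x^5 - 4128*x^6 + 3456*x^7 + 13824*x^8
noncomputable def DGp (x : ℝ) : ℝ := 1/4 - 29*x^2 + 60*x^3 + 760*x^4 - 1824*x^5 - 5760*x^6 + 13824*x^7

set_option maxHeartbeats 2000000 in
lemma key_eq (x : ℝ) (hx0 : 0 < x) (hx1 : x < 1/100) :
    x * (gQ x - fQ x) = NGp x / DGp x - NFp x / DFp x := by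
  have hx6 : (0:ℝ) < 1 - 6*x := by linarith
  have hx2 : (0:ℝ) < 1/2 + 2*x := by linarith
  have h1 : (0:ℝ) < 1/2 - 2*x := by linarith
  have h2 : (0:ℝ) < 1/2 - x := by linarith
  have h3 : (0:ℝ) < 1/4 - x := by linarith
  have hfD : (0:ℝ) < 1 + (1/2 - 2*x)/(4*x) + (1/2 - x)/(2*x) + 3*x/(1 - 6*x) := by
    have a1 := div_pos h1 (by linarith : (0:ℝ) < 4*x)
    have a2 := div_pos h2 (by linarith : (0:ℝ) < 2*x)
    have a3 := div_pos (by linarith : (0:ℝ) < 3*x) hx6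
    linarith
  have hgD : (0:ℝ) < 1 + 2*(1/4 - x)/(1/2 + 2*x) + (1/2 - x)/(2*x) + 3*x/(1 - 6*x) := by
    have a1 := div_pos (by linarith : (0:ℝ) < 2*(1/4 - x)) hx2
    have a2 := div_pos h2 (by linarith : (0:ℝ) < 2*x)
    have a3 := div_pos (by linarith : (0:ℝ) < 3*x) hx6
    linarith
  have hDF : (0:ℝ) < DFp x := by
    unfold DFp; nlinarith [sq_nonneg x, pow_pos hx0 3, pow_pos hx0 4, sq_nonneg (x - 1/100)]
  have hDG : (0:ℝ) < DGp x := by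
    unfold DGp
    nlinarith [pow_pos hx0 2, pow_pos hx0 3, pow_pos hx0 4, pow_pos hx0 5, pow_pos hx0 6,
      pow_pos hx0 7, mul_pos hx0 hx0]
  rw [gQ, fQ, div_sub_div _ _ (ne_of_gt hgD) (ne_of_gt hfD),
    div_sub_div _ _ (ne_of_gt hDG) (ne_of_gt hDF), ← mul_div_assoc,
    div_eq_div_iff (ne_of_gt (mul_pos hgD hfD)) (ne_of_gt (mul_pos hDG hDF))]
  unfold NFp DFp NGp DGp
  have hx6' : (1:ℝ) - 6*x ≠ 0 := ne_of_gt hx6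
  have hx2' : (1:ℝ)/2 + 2*x ≠ 0 := ne_of_gt hx2
  have hx0' : x ≠ 0 := ne_of_gt hx0
  have hx6'' : (1:ℝ) - x*6 ≠ 0 := by linarith
  field_simp
  ring

theorem stmt5 :
    Filter.Tendsto (fun δ : ℝ => δ * (gQ δ - fQ δ))
      (nhdsWithin 0 (Set.Ioi 0)) (nhds (1/24)) := by
  have hmem : Set.Ioo (0:ℝ) (1/100) ∈ nhdsWithin (0:ℝ) (Set.Ioi 0) :=
    Ioo_mem_nhdsGT_of_mem ⟨le_refl 0, by norm_num⟩
  have heq : (fun δ : ℝ => δ * (gQ δ - fQ δ)) =ᶠ[nhdsWithin (0:ℝ) (Set.Ioi 0)]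
      (fun x => NGp x / DGp x - NFp x / DFp x) := by
    filter_upwards [hmem] with x hx
    exact key_eq x hx.1 hx.2
  refine Filter.Tendsto.congr' heq.symm ?_
  have hc : ContinuousAt (fun x : ℝ => NGp x / DGp x - NFp x / DFp x) 0 := by
    apply ContinuousAt.sub
    · apply ContinuousAt.div
      · unfold NGp; fun_prop
      · unfold DGp; fun_prop
      · unfold DGp; norm_num
    · apply ContinuousAt.div
      · unfold NFp; fun_prop
      · unfold DFp; fun_prop
      · unfold DFp; norm_num
  have hval : NGp 0 / DGp 0 - NFp 0 / DFp 0 = 1/24 := by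
    unfold NGp DGp NFp DFp; norm_num
  have := hc.tendsto
  rw [hval] at this
  exact this.mono_left nhdsWithin_le_nhds
end

section
/- Let G=(V,ξ) be a graph with |V|∈{2,3}. If some vector α of positive reals satisfies Ncond for G, then |V|=3 and G is the complete graph on its 3 vertices. Consequently, matching graphs with 2 or 3 nodes do not exhibit a Braess paradox: there is no graph G on at most 3 vertices with a pair of distinct non-adjacent vertices for which some positive α satisfies Ncond. -/
open Classical Finset

lemma key_lt {V : Type} [Fintype V] [DecidableEq V] (G : SimpleGraph V) (α : V → ℝ)
    (hpos : ∀ i, 0 < α i) (hN : Ncond G α) (I : Finset V) (hI : IsIndep G I) :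
    aSum α I < aSum α (Finset.univ \ I) := by
  have h := hN I (by simp [indepSets, hI])
  refine h.trans_le ?_
  apply Finset.sum_le_sum_of_subset_of_nonneg
  · intro j hj
    simp only [nbr, Finset.mem_filter, Finset.mem_univ, true_and] at hj
    obtain ⟨i, hi, hadj⟩ := hj
    simp only [Finset.mem_sdiff, Finset.mem_univ, true_and]
    intro hjI
    exact hI.2 i hi j hjI hadj
  · intro j _ _; exact (hpos j).le

lemma noPair {V : Type} [Fintype V] [DecidableEq V] (G : SimpleGraph V) (α : V → ℝ)
    (hpos : ∀ i, 0 < α i) (hN : Ncond G α) (hcard : Fintype.card V ≤ 3)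
    {i j : V} (hij : i ≠ j) (hadj : ¬ G.Adj i j) : False := by
  have hIij : IsIndep G ({i, j} : Finset V) := by
    refine ⟨⟨i, by simp⟩, ?_⟩
    intro a ha b hb h
    simp only [Finset.mem_insert, Finset.mem_singleton] at ha hb
    rcases ha with rfl | rfl <;> rcases hb with rfl | rfl
    · exact G.irrefl h
    · exact hadj h
    · exact hadj h.symm
    · exact G.irrefl h
  have h1 : aSum α ({i, j} : Finset V) < aSum α (Finset.univ \ {i, j}) :=
    key_lt G α hpos hN _ hIij
  have hsumij : aSum α ({i, j} : Finset V) = α i + α j := by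
    simp [aSum, Finset.sum_pair hij]
  -- univ \ {i,j} has at most one element
  have hcard2 : ({i, j} : Finset V).card = 2 := by
    rw [Finset.card_insert_of_notMem (by simp [hij]), Finset.card_singleton]
  have hc1 : (Finset.univ \ ({i, j} : Finset V)).card ≤ 1 := by
    rw [Finset.card_sdiff_of_subset (Finset.subset_univ _), Finset.card_univ, hcard2]
    omega
  have : Nonempty V := ⟨i⟩
  rcases Finset.card_le_one_iff_subset_singleton.mp hc1 with ⟨k, hk⟩
  have h2 : aSum α (Finset.univ \ ({i, j} : Finset V)) ≤ α k := by
    calc aSum α (Finset.univ \ ({i, j} : Finset V)) ≤ aSum α {k} := by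
          apply Finset.sum_le_sum_of_subset_of_nonneg hk
          intro x _ _; exact (hpos x).le
      _ = α k := by simp [aSum]
  -- now handle k : either k ∈ {i,j} (then univ\{i,j} = ∅) or {k} independent
  by_cases hkij : k ∈ ({i, j} : Finset V)
  · have hempty : Finset.univ \ ({i, j} : Finset V) = ∅ := by
      rw [Finset.eq_empty_iff_forall_notMem]
      intro x hx
      have := hk hx
      simp only [Finset.mem_singleton] at this
      subst this
      exact (Finset.mem_sdiff.mp hx).2 hkij
    rw [hsumij, hempty] at h1
    simp only [aSum, Finset.sum_empty] at h1
    have := add_pos (hpos i) (hpos j)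
    linarith
  · have hIk : IsIndep G ({k} : Finset V) := by
      refine ⟨⟨k, by simp⟩, ?_⟩
      intro a ha b hb h
      simp only [Finset.mem_singleton] at ha hb
      subst ha; subst hb; exact G.irrefl h
    have h3 : aSum α ({k} : Finset V) < aSum α (Finset.univ \ {k}) :=
      key_lt G α hpos hN _ hIk
    have hsub : Finset.univ \ ({k} : Finset V) ⊆ ({i, j} : Finset V) := by
      have hcards : (Finset.univ \ ({k} : Finset V)).card ≤ 2 := by
        rw [Finset.card_sdiff_of_subset (Finset.subset_univ _), Finset.card_univ,
          Finset.card_singleton]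
        omega
      -- {i,j} ⊆ univ \ {k} and cards: use eq_of_subset_of_card_le
      have hsub2 : ({i, j} : Finset V) ⊆ Finset.univ \ {k} := by
        intro x hx
        simp only [Finset.mem_sdiff, Finset.mem_univ, true_and, Finset.mem_singleton]
        intro hxk; subst hxk; exact hkij hx
      have := Finset.eq_of_subset_of_card_le hsub2 (by omega)
      rw [this]
    have h4 : aSum α (Finset.univ \ ({k} : Finset V)) ≤ α i + α j := by
      calc aSum α (Finset.univ \ ({k} : Finset V)) ≤ aSum α ({i, j} : Finset V) := by
            apply Finset.sum_le_sum_of_subset_of_nonneg hsub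
            intro x _ _; exact (hpos x).le
        _ = α i + α j := hsumij
    simp only [aSum, Finset.sum_singleton] at h3 h4
    rw [hsumij] at h1
    simp only [aSum] at h1 h2
    linarith

theorem stmt12 :
    (∀ (V : Type) [Fintype V] [DecidableEq V] (G : SimpleGraph V),
      (Fintype.card V = 2 ∨ Fintype.card V = 3) →
      (∃ α : V → ℝ, (∀ i, 0 < α i) ∧ Ncond G α) →
      Fintype.card V = 3 ∧ G = ⊤) ∧
    (∀ (V : Type) [Fintype V] [DecidableEq V] (G : SimpleGraph V),
      Fintype.card V ≤ 3 →
      ¬ ∃ i j : V, i ≠ j ∧ ¬ G.Adj i j ∧ ∃ α : V → ℝ, (∀ i, 0 < α i) ∧ Ncond G α) := by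
  constructor
  · rintro V _ _ G hcard ⟨α, hpos, hN⟩
    have hle3 : Fintype.card V ≤ 3 := by rcases hcard with h | h <;> omega
    have hadj : ∀ i j : V, i ≠ j → G.Adj i j := by
      intro i j hij
      by_contra h
      exact noPair G α hpos hN hle3 hij h
    have hne2 : Fintype.card V ≠ 2 := by
      intro h2
      have : Nonempty V := Fintype.card_pos_iff.mp (by omega)
      obtain ⟨i, j, hij⟩ := Fintype.exists_pair_of_one_lt_card (α := V) (by omega)
      have hIi : IsIndep G ({i} : Finset V) := by
        refine ⟨⟨i, by simp⟩, ?_⟩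
        intro a ha b hb hab
        simp only [Finset.mem_singleton] at ha hb
        subst ha; subst hb; exact G.irrefl hab
      have hIj : IsIndep G ({j} : Finset V) := by
        refine ⟨⟨j, by simp⟩, ?_⟩
        intro a ha b hb hab
        simp only [Finset.mem_singleton] at ha hb
        subst ha; subst hb; exact G.irrefl hab
      have h1 := key_lt G α hpos hN _ hIi
      have h2' := key_lt G α hpos hN _ hIj
      have huj : Finset.univ \ ({i} : Finset V) = {j} := by
        have hc : (Finset.univ \ ({i} : Finset V)).card = 1 := by
          rw [Finset.card_sdiff_of_subset (Finset.subset_univ _), Finset.card_univ,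
            Finset.card_singleton, h2]
        obtain ⟨a, ha⟩ := Finset.card_eq_one.mp hc
        have hja : j ∈ Finset.univ \ ({i} : Finset V) := by
          simp [hij.symm]
        rw [ha] at hja ⊢
        simp only [Finset.mem_singleton] at hja
        rw [hja]
      have hui : Finset.univ \ ({j} : Finset V) = {i} := by
        have hc : (Finset.univ \ ({j} : Finset V)).card = 1 := by
          rw [Finset.card_sdiff_of_subset (Finset.subset_univ _), Finset.card_univ,
            Finset.card_singleton, h2]
        obtain ⟨a, ha⟩ := Finset.card_eq_one.mp hc
        have hja : i ∈ Finset.univ \ ({j} : Finset V) := by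
          simp [hij]
        rw [ha] at hja ⊢
        simp only [Finset.mem_singleton] at hja
        rw [hja]
      rw [huj] at h1
      rw [hui] at h2'
      simp only [aSum, Finset.sum_singleton] at h1 h2'
      linarith
    refine ⟨by omega, ?_⟩
    ext i j
    simp only [SimpleGraph.top_adj]
    exact ⟨fun h => h.ne, fun h => hadj i j h⟩
  · rintro V _ _ G hcard ⟨i, j, hij, hnadj, α, hpos, hN⟩
    exact noPair G α hpos hN hcard hij hnadj
end

section
/- If α (a vector of positive reals indexed by V) satisfies Ncond for the aggregated matching graph G_x, then the decomposed arrival vector β satisfies Ncond for the decomposition matching graph G_yz. -/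
open Classical Finset

def psiMap {V : Type} (x : V) : V ⊕ Unit → V := Sum.elim id fun _ => x

def Gyz {V : Type} (G : SimpleGraph V) (x : V) : SimpleGraph (V ⊕ Unit) :=
  SimpleGraph.comap (psiMap x) G

noncomputable def betaArr {V : Type} [DecidableEq V] (α : V → ℝ) (x : V) (by_ bz : ℝ) :
    V ⊕ Unit → ℝ :=
  Sum.elim (fun v => if v = x then by_ else α v) fun _ => bz

theorem stmt13 {V : Type} [Fintype V] [DecidableEq V] (G : SimpleGraph V) (α : V → ℝ)
    (hpos : ∀ i, 0 < α i) (hN : Ncond G α) (x : V) (by_ bz : ℝ)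
    (hy : 0 < by_) (hz : 0 < bz) (hyz : by_ + bz = α x) :
    Ncond (Gyz G x) (betaArr α x by_ bz) := by
  intro I hI
  simp only [indepSets, Finset.mem_filter] at hI
  obtain ⟨-, hne, hind⟩ := hI
  set ψ : V ⊕ Unit → V := psiMap x with hψ
  set β : V ⊕ Unit → ℝ := betaArr α x by_ bz with hβ
  set I' : Finset V := I.image ψ with hI'def
  have hβpos : ∀ a, 0 < β a := by
    intro a
    rcases a with v | u
    · simp only [hβ, betaArr, Sum.elim_inl]
      split <;> [exact hy; exact hpos v]
    · simpa [hβ, betaArr] using hz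
  have hψinl : ∀ v : V, ψ (Sum.inl v) = v := fun v => rfl
  have hψinr : ∀ u : Unit, ψ (Sum.inr u) = x := fun u => rfl
  have hI'indep : IsIndep G I' := by
    constructor
    · exact hne.image ψ
    · intro i hi j hj hadj
      obtain ⟨a, ha, rfl⟩ := Finset.mem_image.mp hi
      obtain ⟨b, hb, rfl⟩ := Finset.mem_image.mp hj
      exact hind a ha b hb hadj
  have hmain := hN I' (by simp [indepSets, hI'indep])
  have key : ∀ S : Finset V,
      aSum β (Finset.univ.filter fun a => ψ a ∈ S) = aSum α S := by
    intro S
    rw [aSum, Finset.sum_filter, Fintype.sum_sum_type]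
    have h1 : ∀ v : V, (if ψ (Sum.inl v) ∈ S then β (Sum.inl v) else 0)
        = α v + (if v ∈ S then 0 else -α v) + (if v = x ∧ v ∈ S then by_ - α x else 0) := by
      intro v
      simp only [hψinl, hβ, betaArr, Sum.elim_inl]
      by_cases hvx : v = x
      · subst hvx
        by_cases hvS : v ∈ S <;> simp [hvS] <;> ring
      · by_cases hvS : v ∈ S <;> simp [hvS, hvx]
    have h2 : (∑ u : Unit, if ψ (Sum.inr u) ∈ S then β (Sum.inr u) else 0)
        = if x ∈ S then bz else 0 := by
      simp [hψinr, hβ, betaArr]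
    rw [h2, Finset.sum_congr rfl fun v _ => h1 v]
    rw [Finset.sum_add_distrib, Finset.sum_add_distrib]
    have h3 : (∑ v : V, if v = x ∧ v ∈ S then by_ - α x else 0)
        = if x ∈ S then by_ - α x else 0 := by
      have hv : ∀ v : V, (if v = x ∧ v ∈ S then by_ - α x else 0)
          = if v = x then (if x ∈ S then by_ - α x else 0) else 0 := by
        intro v; by_cases hv : v = x <;> simp [hv]
      rw [Finset.sum_congr rfl fun v _ => hv v, Finset.sum_ite_eq' Finset.univ x,
        if_pos (Finset.mem_univ x)]
    have h4 : (∑ v : V, α v) + (∑ v : V, if v ∈ S then (0:ℝ) else -α v)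
        = aSum α S := by
      rw [aSum, ← Finset.sum_add_distrib]
      rw [show (∑ v : V, (α v + if v ∈ S then (0:ℝ) else -α v))
          = ∑ v : V, (if v ∈ S then α v else 0) from
        Finset.sum_congr rfl fun v _ => by by_cases h : v ∈ S <;> simp [h]]
      rw [← Finset.sum_filter, Finset.filter_mem_eq_inter, Finset.univ_inter]
    rw [h3, h4]
    by_cases hxS : x ∈ S <;> simp [hxS] <;> linarith
  have hnbr : nbr (Gyz G x) I = Finset.univ.filter fun a => ψ a ∈ nbr G I' := by
    ext a
    simp only [nbr, Finset.mem_filter, Finset.mem_univ, true_and, hI'def,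
      Finset.mem_image, Gyz, SimpleGraph.comap_adj]
    constructor
    · rintro ⟨i, hi, hadj⟩
      exact ⟨ψ i, ⟨i, hi, rfl⟩, hadj⟩
    · rintro ⟨i', ⟨i, hi, rfl⟩, hadj⟩
      exact ⟨i, hi, hadj⟩
  have hsub : I ⊆ Finset.univ.filter fun a => ψ a ∈ I' := by
    intro a ha
    simp only [Finset.mem_filter, Finset.mem_univ, true_and, hI'def]
    exact Finset.mem_image_of_mem ψ ha
  have hle : aSum β I ≤ aSum α I' := by
    rw [← key I']
    exact Finset.sum_le_sum_of_subset_of_nonneg hsub fun a _ _ => (hβpos a).le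
  calc aSum β I ≤ aSum α I' := hle
    _ < aSum α (nbr G I') := hmain
    _ = aSum β (nbr (Gyz G x) I) := by rw [hnbr, key]
end

section
/- For every word w over the alphabet (V∖{x})∪{y,z} and every letter t∈(V∖{x})∪{y,z}, the FCFS transitions commute with aggregation: φ(e^{G_yz}_t(w)) = e^{G_x}_{ψ(t)}(φ(w)). In particular, the arrival of y and the arrival of z have the same effect on the aggregated word: φ(e^{G_yz}_y(w)) = φ(e^{G_yz}_z(w)) = e^{G_x}_x(φ(w)). -/
open Classical Finset

noncomputable def fcfs {V : Type} (G : SimpleGraph V) (t : V) (w : List V) : List V :=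
  if ∃ a ∈ w, G.Adj t a then w.eraseP (fun a => decide (G.Adj t a)) else w ++ [t]

theorem stmt14 {V : Type} (G : SimpleGraph V) (x : V) :
    (∀ (w : List (V ⊕ Unit)) (t : V ⊕ Unit),
      (fcfs (Gyz G x) t w).map (psiMap x) = fcfs G (psiMap x t) (w.map (psiMap x))) ∧
    (∀ w : List (V ⊕ Unit),
      (fcfs (Gyz G x) (Sum.inl x) w).map (psiMap x) = fcfs G x (w.map (psiMap x)) ∧
      (fcfs (Gyz G x) (Sum.inr ()) w).map (psiMap x) = fcfs G x (w.map (psiMap x))) := by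
  have key : ∀ (w : List (V ⊕ Unit)) (t : V ⊕ Unit),
      (fcfs (Gyz G x) t w).map (psiMap x) = fcfs G (psiMap x t) (w.map (psiMap x)) := by
    intro w t
    unfold fcfs
    have hadj : ∀ a, (Gyz G x).Adj t a ↔ G.Adj (psiMap x t) (psiMap x a) := fun a => Iff.rfl
    have hcond : (∃ a ∈ w, (Gyz G x).Adj t a) ↔
        ∃ a ∈ w.map (psiMap x), G.Adj (psiMap x t) a := by
      constructor
      · rintro ⟨a, ha, h⟩; exact ⟨psiMap x a, List.mem_map_of_mem ha, h⟩
      · rintro ⟨a, ha, h⟩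
        obtain ⟨b, hb, rfl⟩ := List.mem_map.mp ha
        exact ⟨b, hb, h⟩
    by_cases h : ∃ a ∈ w, (Gyz G x).Adj t a
    · rw [if_pos h, if_pos (hcond.mp h), List.eraseP_map]
      rfl
    · rw [if_neg h, if_neg (fun hc => h (hcond.mpr hc))]
      simp
  refine ⟨key, fun w => ⟨?_, ?_⟩⟩
  · exact key w (Sum.inl x)
  · exact key w (Sum.inr ())
end
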